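/- For every 1 ≤ p < ∞ there exists a constant A > 0, independent of n, such that for all n ∈ ℕ: ‖V_{2n} − V_n‖_p ≤ A·n^{1−1/p}, where ‖f‖_p = (∫_{−π}^{π}|f(t)|^p dt)^{1/p}. In particular, for p = 1, ‖V_{2n} − V_n‖_1 is bounded by an absolute constant. -/

import Mathlib

open Real Finset MeasureTheory

noncomputable def dirichletK (k : ℕ) (t : ℝ) : ℝ :=
  1 / 2 + ∑ ν ∈ Finset.Icc 1 k, Real.cos ((ν : ℝ) * t)

noncomputable def vallee (m : ℕ) (t : ℝ) : ℝ :=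
  (1 / (m : ℝ)) * ∑ k ∈ Finset.Icc m (2 * m - 1), dirichletK k t

lemma dirichletK_mul (k : ℕ) (t : ℝ) :
    2 * sin (t/2) * dirichletK k t = sin (((k : ℝ) + 1/2) * t) := by
  induction k with
  | zero =>
    have he : Finset.Icc 1 0 = (∅ : Finset ℕ) := by decide
    simp only [dirichletK, he, Finset.sum_empty, Nat.cast_zero, add_zero]
    rw [show ((0:ℝ) + 1/2) * t = t/2 by ring]; ring
  | succ k ih =>
    rw [dirichletK, Finset.sum_Icc_succ_top (by omega)]
    have key : 2 * sin (t/2) * (1/2 + ∑ ν ∈ Finset.Icc 1 k, Real.cos ((ν : ℝ) * t))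
        = sin (((k : ℝ) + 1/2) * t) := ih
    have e1 : ((k:ℝ) + 1/2) * t = ((k:ℝ)+1) * t - t/2 := by ring
    have e2 : (((k:ℕ)+1 : ℕ):ℝ) * t = ((k:ℝ)+1) * t := by push_cast; ring
    have e3 : (((k:ℕ)+1 : ℕ):ℝ) + 1/2 = ((k:ℝ)+1) + 1/2 := by push_cast; ring
    rw [e2, e3, show (((k:ℝ)+1) + 1/2) * t = ((k:ℝ)+1)*t + t/2 by ring, sin_add]
    rw [e1, sin_sub] at key
    nlinarith [key]

lemma four_sin_sq_dirichletK (k : ℕ) (t : ℝ) :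
    4 * sin (t/2)^2 * dirichletK k t = cos ((k:ℝ) * t) - cos (((k:ℝ)+1) * t) := by
  have h := dirichletK_mul k t
  have h2 : 2 * sin (t/2) * sin (((k:ℝ) + 1/2) * t)
      = cos ((k:ℝ)*t) - cos (((k:ℝ)+1)*t) := by
    rw [show (k:ℝ)*t = ((k:ℝ)+1/2)*t - t/2 by ring,
        show ((k:ℝ)+1)*t = ((k:ℝ)+1/2)*t + t/2 by ring, cos_sub, cos_add]
    ring
  calc 4 * sin (t/2)^2 * dirichletK k t
      = 2 * sin (t/2) * (2 * sin (t/2) * dirichletK k t) := by ring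
    _ = 2 * sin (t/2) * sin (((k : ℝ) + 1/2) * t) := by rw [h]
    _ = cos ((k:ℝ)*t) - cos (((k:ℝ)+1)*t) := h2

lemma sum_dirichlet_eq (m : ℕ) (hm : 1 ≤ m) (t : ℝ) :
    4 * sin (t/2)^2 * ∑ k ∈ Finset.Icc m (2*m-1), dirichletK k t
      = cos ((m:ℝ) * t) - cos ((2*m : ℝ) * t) := by
  rw [Finset.mul_sum]
  have : ∀ k ∈ Finset.Icc m (2*m-1), 4 * sin (t/2)^2 * dirichletK k t
      = cos ((k:ℝ) * t) - cos (((k:ℝ)+1) * t) := fun k _ => four_sin_sq_dirichletK k t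
  rw [Finset.sum_congr rfl this]
  have hIcc : Finset.Icc m (2*m-1) = Finset.Ico m (2*m) := by
    rw [← Finset.Ico_add_one_right_eq_Icc]; congr 1; omega
  rw [hIcc, Finset.sum_Ico_eq_sum_range]
  have := Finset.sum_range_sub' (fun i => cos (((m + i : ℕ):ℝ) * t)) (2*m - m)
  calc ∑ k ∈ Finset.range (2*m - m), (cos (((m+k:ℕ):ℝ) * t) - cos ((((m+k:ℕ):ℝ)+1) * t))
      = ∑ k ∈ Finset.range (2*m - m),
          (cos (((m+k:ℕ):ℝ) * t) - cos (((m+(k+1):ℕ):ℝ) * t)) := by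
        apply Finset.sum_congr rfl; intro k _
        congr 2
        push_cast; ring
    _ = cos (((m+0:ℕ):ℝ)*t) - cos (((m + (2*m-m) : ℕ):ℝ)*t) :=
        Finset.sum_range_sub' (fun i => cos (((m + i : ℕ):ℝ) * t)) (2*m - m)
    _ = cos ((m:ℝ)*t) - cos ((2*m:ℝ)*t) := by
        rw [show m + (2*m-m) = 2*m by omega]
        push_cast
        norm_num

lemma abs_dirichletK_le (k : ℕ) (t : ℝ) : |dirichletK k t| ≤ 1/2 + k := by
  rw [dirichletK]
  refine (abs_add_le _ _).trans ?_
  have h1 : |(1:ℝ)/2| = 1/2 := by norm_num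
  rw [h1]
  gcongr
  calc |∑ ν ∈ Finset.Icc 1 k, cos ((ν:ℝ) * t)| ≤ ∑ ν ∈ Finset.Icc 1 k, |cos ((ν:ℝ) * t)| :=
        Finset.abs_sum_le_sum_abs _ _
    _ ≤ ∑ _ν ∈ Finset.Icc 1 k, (1:ℝ) := Finset.sum_le_sum (fun i _ => abs_cos_le_one _)
    _ = k := by simp [Nat.card_Icc]

lemma abs_vallee_le (m : ℕ) (hm : 1 ≤ m) (t : ℝ) : |vallee m t| ≤ 2 * m := by
  have hm' : (0:ℝ) < m := by exact_mod_cast hm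
  rw [vallee, abs_mul, abs_of_nonneg (by positivity : (0:ℝ) ≤ 1 / m)]
  have hcard : (Finset.Icc m (2*m-1)).card = m := by rw [Nat.card_Icc]; omega
  have hsum : |∑ k ∈ Finset.Icc m (2*m-1), dirichletK k t| ≤ m * (2*m) := by
    calc |∑ k ∈ Finset.Icc m (2*m-1), dirichletK k t|
        ≤ ∑ k ∈ Finset.Icc m (2*m-1), |dirichletK k t| := Finset.abs_sum_le_sum_abs _ _
      _ ≤ ∑ _k ∈ Finset.Icc m (2*m-1), (2*(m:ℝ)) := by
          apply Finset.sum_le_sum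
          intro k hk
          refine (abs_dirichletK_le k t).trans ?_
          have hk2 : k + 1 ≤ 2*m := by
            have := (Finset.mem_Icc.mp hk).2; omega
          have : (k:ℝ) + 1 ≤ 2*m := by exact_mod_cast hk2
          linarith
      _ = m * (2*m) := by rw [Finset.sum_const, hcard]; simp [mul_comm]
  calc 1/(m:ℝ) * |∑ k ∈ Finset.Icc m (2*m-1), dirichletK k t|
      ≤ 1/(m:ℝ) * ((m:ℝ) * (2*m)) := by gcongr
    _ = 2*m := by field_simp

lemma abs_vallee_le' (m : ℕ) (hm : 1 ≤ m) {t : ℝ} (ht : sin (t/2) ≠ 0) :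
    |vallee m t| ≤ 1 / (2 * m * sin (t/2)^2) := by
  have hm' : (0:ℝ) < m := by exact_mod_cast hm
  have hs : (0:ℝ) < sin (t/2)^2 := by positivity
  have h := sum_dirichlet_eq m hm t
  have h1 : 4 * sin (t/2)^2 * |∑ k ∈ Finset.Icc m (2*m-1), dirichletK k t| ≤ 2 := by
    rw [← abs_of_nonneg (by positivity : (0:ℝ) ≤ 4 * sin (t/2)^2), ← abs_mul, h]
    calc |cos ((m:ℝ)*t) - cos ((2*m:ℝ)*t)| ≤ |cos ((m:ℝ)*t)| + |cos ((2*m:ℝ)*t)| :=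
        abs_sub _ _
      _ ≤ 1 + 1 := add_le_add (abs_cos_le_one _) (abs_cos_le_one _)
      _ = 2 := by norm_num
  rw [vallee, abs_mul, abs_of_nonneg (by positivity : (0:ℝ) ≤ 1 / m),
    le_div_iff₀ (by positivity)]
  have hmm : (m:ℝ) * (1/m) = 1 := by field_simp
  nlinarith [h1, abs_nonneg (∑ k ∈ Finset.Icc m (2*m-1), dirichletK k t)]

lemma diff_decay (n : ℕ) (hn : 1 ≤ n) {t : ℝ} (ht0 : 0 < t) (htp : t ≤ π) :
    |vallee (2*n) t - vallee n t| ≤ 3*π^2/(4*n) * (1/t^2) := by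
  have hn' : (0:ℝ) < n := by exact_mod_cast hn
  have hπ := pi_pos
  have hs : 0 < sin (t/2) := sin_pos_of_pos_of_lt_pi (by linarith) (by linarith)
  have hlow : t/π ≤ sin (t/2) := by
    have := Real.mul_le_sin (x := t/2) (by linarith) (by linarith)
    calc t/π = 2/π * (t/2) := by ring
      _ ≤ sin (t/2) := this
  have hsq : t^2/π^2 ≤ sin (t/2)^2 := by
    have h2 := pow_le_pow_left₀ (by positivity : (0:ℝ) ≤ t/π) hlow 2
    calc t^2/π^2 = (t/π)^2 := by rw [div_pow]
      _ ≤ sin (t/2)^2 := h2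
  have b1 := abs_vallee_le' (2*n) (by omega) hs.ne'
  have b2 := abs_vallee_le' n hn hs.ne'
  have hcast : ((2*n : ℕ):ℝ) = 2*(n:ℝ) := by push_cast; ring
  rw [hcast] at b1
  have hs2 : (0:ℝ) < sin (t/2)^2 := by positivity
  calc |vallee (2*n) t - vallee n t| ≤ |vallee (2*n) t| + |vallee n t| := abs_sub _ _
    _ ≤ 1 / (2*(2*(n:ℝ)) * sin (t/2)^2) + 1 / (2*n * sin (t/2)^2) := add_le_add b1 b2
    _ = 3 / (4*n * sin (t/2)^2) := by field_simp; ring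
    _ ≤ 3*π^2/(4*n) * (1/t^2) := by
        rw [div_le_iff₀ (by positivity)]
        have key : t^2 ≤ π^2 * sin (t/2)^2 := by
          rw [div_le_iff₀ (by positivity)] at hsq
          linarith [hsq]
        field_simp
        nlinarith [key, hn', hs2, sq_nonneg t]

lemma continuous_vallee (m : ℕ) : Continuous (vallee m) := by
  unfold vallee dirichletK
  fun_prop

lemma vallee_even (m : ℕ) (t : ℝ) : vallee m (-t) = vallee m t := by
  simp [vallee, dirichletK, mul_neg, Real.cos_neg]

lemma L1_bound (n : ℕ) (hn : 1 ≤ n) :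
    ∫ t in (-π)..π, |vallee (2*n) t - vallee n t| ≤ 27 := by
  set f := fun t => |vallee (2*n) t - vallee n t| with hf
  have hfc : Continuous f := ((continuous_vallee (2*n)).sub (continuous_vallee n)).abs
  have hint : ∀ a b : ℝ, IntervalIntegrable f volume a b :=
    fun a b => hfc.intervalIntegrable a b
  have hπ := pi_pos
  have hn' : (0:ℝ) < n := by exact_mod_cast hn
  have h1n : 1/(n:ℝ) ≤ π := by
    have h1 : 1/(n:ℝ) ≤ 1 := by
      rw [div_le_one hn']; exact_mod_cast hn
    linarith [Real.pi_gt_three]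
  -- bound on the middle part [0, 1/n]
  have mid : ∫ t in (0:ℝ)..(1/n:ℝ), f t ≤ 6 := by
    have step : ∫ t in (0:ℝ)..(1/n:ℝ), f t ≤ ∫ _t in (0:ℝ)..(1/n:ℝ), (6*(n:ℝ)) := by
      apply intervalIntegral.integral_mono_on (by positivity) (hint _ _)
        intervalIntegrable_const
      intro x _
      have b1 := abs_vallee_le (2*n) (by omega) x
      have b2 := abs_vallee_le n hn x
      have hcast : ((2*n : ℕ):ℝ) = 2*(n:ℝ) := by push_cast; ring
      rw [hcast] at b1
      calc f x ≤ |vallee (2*n) x| + |vallee n x| := abs_sub _ _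
        _ ≤ 2*(2*(n:ℝ)) + 2*(n:ℝ) := add_le_add b1 b2
        _ = 6*(n:ℝ) := by ring
    rw [intervalIntegral.integral_const] at step
    have : ((1:ℝ)/n - 0) • (6*(n:ℝ)) = 6 := by
      rw [smul_eq_mul]; field_simp; ring
    rw [this] at step
    exact step
  -- bound on the tail [1/n, π]
  have tail : ∫ t in (1/n:ℝ)..π, f t ≤ 3*π^2/4 := by
    have h0 : (0:ℝ) ∉ Set.uIcc (1/(n:ℝ)) π := by
      rw [Set.uIcc_of_le h1n]
      rintro ⟨h1, _⟩
      have : (0:ℝ) < 1/n := by positivity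
      linarith
    have step : ∫ t in (1/n:ℝ)..π, f t
        ≤ ∫ t in (1/n:ℝ)..π, (3*π^2/(4*(n:ℝ))) * t^(-2:ℤ) := by
      apply intervalIntegral.integral_mono_on h1n (hint _ _)
        ((intervalIntegral.intervalIntegrable_zpow (Or.inr h0)).const_mul _)
      intro x hx
      have hx0 : 0 < x := lt_of_lt_of_le (by positivity) hx.1
      have := diff_decay n hn hx0 hx.2
      have hz : (x:ℝ)^(-2:ℤ) = 1/x^2 := by
        rw [zpow_neg, one_div, sq]
        norm_num [zpow_two]
        ring
      rw [hz]
      exact this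
    rw [intervalIntegral.integral_const_mul,
      integral_zpow (Or.inr ⟨by norm_num, h0⟩)] at step
    have hval : ((π:ℝ)^((-2:ℤ)+1) - ((1/(n:ℝ)))^((-2:ℤ)+1)) / (((-2:ℤ):ℝ) + 1)
        = (n:ℝ) - π⁻¹ := by
      norm_num [zpow_neg]
      ring
    rw [hval] at step
    calc ∫ t in (1/n:ℝ)..π, f t ≤ 3*π^2/(4*(n:ℝ)) * ((n:ℝ) - π⁻¹) := step
      _ ≤ 3*π^2/(4*(n:ℝ)) * (n:ℝ) := by
          apply mul_le_mul_of_nonneg_left _ (by positivity)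
          have : (0:ℝ) < π⁻¹ := by positivity
          linarith
      _ = 3*π^2/4 := by field_simp
  -- evenness
  have even : ∫ t in (-π)..(0:ℝ), f t = ∫ t in (0:ℝ)..π, f t := by
    calc ∫ t in (-π)..(0:ℝ), f t = ∫ t in (-π)..(-0:ℝ), f t := by norm_num
      _ = ∫ t in (0:ℝ)..π, f (-t) := (intervalIntegral.integral_comp_neg f).symm
      _ = ∫ t in (0:ℝ)..π, f t := by
          apply intervalIntegral.integral_congr
          intro x _
          simp only [hf, vallee_even]
  have split1 : ∫ t in (-π)..π, f t = (∫ t in (-π)..(0:ℝ), f t) + ∫ t in (0:ℝ)..π, f t :=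
    (intervalIntegral.integral_add_adjacent_intervals (hint _ _) (hint _ _)).symm
  have split2 : ∫ t in (0:ℝ)..π, f t
      = (∫ t in (0:ℝ)..(1/n:ℝ), f t) + ∫ t in (1/n:ℝ)..π, f t :=
    (intervalIntegral.integral_add_adjacent_intervals (hint _ _) (hint _ _)).symm
  rw [split1, even, split2]
  have hπ2 : π < 3.15 := pi_lt_d2
  nlinarith [mid, tail, hπ2, hπ]

/-- For every `1 ≤ p < ∞` there is a constant `A > 0`, independent of `n`,
such that for all `n ≥ 1`: `‖V_{2n} − V_n‖_p ≤ A·n^{1−1/p}`, where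
`‖f‖_p = (∫_{−π}^{π}|f|^p)^{1/p}`.  (For `p = 1` this gives a bound by an absolute
constant.) -/
theorem vallee_diff_norm_bound (p : ℝ) (hp : 1 ≤ p) :
    ∃ A : ℝ, 0 < A ∧ ∀ n : ℕ, 1 ≤ n →
      (∫ t in (-π)..π, |vallee (2 * n) t - vallee n t| ^ p) ^ (1 / p) ≤
        A * (n : ℝ) ^ (1 - 1 / p) := by
  refine ⟨162, by norm_num, ?_⟩
  intro n hn
  have hp0 : (0:ℝ) < p := by linarith
  have hπ := pi_pos
  have hn' : (0:ℝ) < n := by exact_mod_cast hn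
  set g := fun t => vallee (2*n) t - vallee n t with hg
  have hgc : Continuous g := (continuous_vallee (2*n)).sub (continuous_vallee n)
  have hgabs : Continuous fun t => |g t| := hgc.abs
  have hgp : Continuous fun t => |g t| ^ p :=
    hgabs.rpow_const (fun x => Or.inr (le_of_lt hp0))
  -- pointwise bound on |g|
  have hbound : ∀ x : ℝ, |g x| ≤ 6*(n:ℝ) := by
    intro x
    have b1 := abs_vallee_le (2*n) (by omega) x
    have b2 := abs_vallee_le n hn x
    have hcast : ((2*n : ℕ):ℝ) = 2*(n:ℝ) := by push_cast; ring
    rw [hcast] at b1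
    calc |g x| ≤ |vallee (2*n) x| + |vallee n x| := abs_sub _ _
      _ ≤ 2*(2*(n:ℝ)) + 2*(n:ℝ) := add_le_add b1 b2
      _ = 6*(n:ℝ) := by ring
  have h6n : (0:ℝ) < 6*n := by positivity
  -- ∫ |g|^p ≤ (6n)^(p-1) * ∫ |g|
  have key : ∫ t in (-π)..π, |g t| ^ p ≤ (6*(n:ℝ))^(p-1) * 27 := by
    have step1 : ∫ t in (-π)..π, |g t| ^ p
        ≤ ∫ t in (-π)..π, (6*(n:ℝ))^(p-1) * |g t| := by
      apply intervalIntegral.integral_mono_on (by linarith)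
        (hgp.intervalIntegrable _ _) ((continuous_const.mul hgabs).intervalIntegrable _ _)
      intro x _
      rcases eq_or_ne (|g x|) 0 with h0 | h0
      · simp only [Pi.mul_apply]; rw [h0, Real.zero_rpow (ne_of_gt hp0), mul_zero]
      · have hpos : 0 < |g x| := lt_of_le_of_ne (abs_nonneg _) (Ne.symm h0)
        calc |g x| ^ p = |g x| ^ ((p-1)+1) := by norm_num
          _ = |g x| ^ (p-1) * |g x| := Real.rpow_add_one h0 _
          _ ≤ (6*(n:ℝ))^(p-1) * |g x| := by
              apply mul_le_mul_of_nonneg_right _ (abs_nonneg _)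
              exact Real.rpow_le_rpow (abs_nonneg _) (hbound x) (by linarith)
    rw [intervalIntegral.integral_const_mul] at step1
    calc ∫ t in (-π)..π, |g t| ^ p
        ≤ (6*(n:ℝ))^(p-1) * ∫ t in (-π)..π, |g t| := step1
      _ ≤ (6*(n:ℝ))^(p-1) * 27 := by
          apply mul_le_mul_of_nonneg_left (L1_bound n hn)
          exact Real.rpow_nonneg (le_of_lt h6n) _
  -- take the 1/p power
  have hInonneg : (0:ℝ) ≤ ∫ t in (-π)..π, |g t| ^ p :=
    intervalIntegral.integral_nonneg (by linarith)
      (fun u _ => Real.rpow_nonneg (abs_nonneg _) _)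
  have step2 : (∫ t in (-π)..π, |g t| ^ p) ^ (1/p)
      ≤ ((6*(n:ℝ))^(p-1) * 27) ^ (1/p) :=
    Real.rpow_le_rpow hInonneg key (by positivity)
  have expand : ((6*(n:ℝ))^(p-1) * 27) ^ (1/p)
      = (6:ℝ)^(1-1/p) * (n:ℝ)^(1-1/p) * 27^(1/p) := by
    rw [Real.mul_rpow (Real.rpow_nonneg (le_of_lt h6n) _) (by norm_num),
      ← Real.rpow_mul (le_of_lt h6n)]
    have hexp : (p-1) * (1/p) = 1 - 1/p := by
      rw [mul_one_div, sub_div, div_self (ne_of_gt hp0)]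
    rw [hexp, Real.mul_rpow (by norm_num : (0:ℝ) ≤ 6) (le_of_lt hn')]
  have h6 : (6:ℝ)^(1-1/p) ≤ 6 := by
    have : (6:ℝ)^(1-1/p) ≤ (6:ℝ)^(1:ℝ) :=
      Real.rpow_le_rpow_of_exponent_le (by norm_num)
        (by simp only [sub_le_self_iff]; positivity)
    rwa [Real.rpow_one] at this
  have h27 : (27:ℝ)^(1/p) ≤ 27 := by
    have h1p : 1/p ≤ 1 := by rw [div_le_one hp0]; exact hp
    have : (27:ℝ)^(1/p) ≤ (27:ℝ)^(1:ℝ) :=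
      Real.rpow_le_rpow_of_exponent_le (by norm_num) h1p
    rwa [Real.rpow_one] at this
  have hnpow : (0:ℝ) ≤ (n:ℝ)^(1-1/p) := Real.rpow_nonneg (le_of_lt hn') _
  calc (∫ t in (-π)..π, |g t| ^ p) ^ (1/p)
      ≤ (6:ℝ)^(1-1/p) * (n:ℝ)^(1-1/p) * 27^(1/p) := by rw [← expand]; exact step2
    _ ≤ 6 * (n:ℝ)^(1-1/p) * 27 := by
        apply mul_le_mul _ h27 (Real.rpow_nonneg (by norm_num) _) (by positivity)
        exact mul_le_mul_of_nonneg_right h6 hnpow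
    _ = 162 * (n:ℝ)^(1-1/p) := by ring
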